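/- For each positive integer m, there exists r ∈ {0, 1, 2, 3, 4} such that m − r = 3·s^{-1}(m) + 2·φ(m), where s^{-1}(m) = max{n : s(n) ≤ m} and φ(m) is the sum of the μ-digits of m. -/

import Mathlib

/-- `Alist k` is the list `A_{k+1}`: `A_1 = [5]`, `A_{k+1} = A_k ++ A_k ++ [1]`. -/
def Alist : ℕ → List ℕ
  | 0 => [5]
  | k+1 => Alist k ++ Alist k ++ [1]

/-- `aseq n` is the `n`-th term (1-indexed) of the limit of the lists `A_k`;
`aseq 0 = 0` by convention. -/
def aseq (n : ℕ) : ℕ := (Alist n).getD (n - 1) 0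

/-- Partial sums: `s n = a_1 + ⋯ + a_n`, `s 0 = 0`. -/
def s (n : ℕ) : ℕ := ∑ i ∈ Finset.Icc 1 n, aseq i

/-- `μ_i = 2^{i+1} + 2^i - 1`. -/
def mu (i : ℕ) : ℕ := 2 ^ (i + 1) + 2 ^ i - 1

/-- The largest `ℓ ≥ 1` with `μ_ℓ ≤ n` (`0` if there is none). -/
def maxMu (n : ℕ) : ℕ := Nat.findGreatest (fun ℓ => 0 < ℓ ∧ mu ℓ ≤ n) n

/-- `mudig n i` is the digit `ε_i` in the greedy μ-expansion
`n = r + ε_1·μ_1 + ⋯ + ε_ℓ·μ_ℓ` with `r ∈ {0,…,4}`. -/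
def mudig (n : ℕ) : ℕ → ℕ :=
  if _h : n ≤ 4 then fun _ => 0
  else
    let ℓ := maxMu n
    let r := n - mu ℓ
    if r = mu ℓ then fun i => if i = ℓ then 2 else 0
    else fun i => (if i = ℓ then 1 else 0) + mudig r i
termination_by n
decreasing_by
  have h1 : 1 ≤ maxMu n :=
    Nat.le_findGreatest (by omega) ⟨one_pos, by simp [mu]; omega⟩
  have h2 : 2 ≤ 2 ^ maxMu n := by
    calc (2 : ℕ) = 2 ^ 1 := rfl
    _ ≤ 2 ^ maxMu n := Nat.pow_le_pow_right (by norm_num) h1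
  have : 5 ≤ mu (maxMu n) := by simp [mu]; omega
  omega

/-- Sum of the μ-digits of `m`. -/
def phi (m : ℕ) : ℕ := ∑ i ∈ Finset.Icc 1 m, mudig m i

/-- `s⁻¹(m) = max {n : s n ≤ m}` (all such `n` are at most `m` since `s n ≥ n`). -/
def sInv (m : ℕ) : ℕ := Nat.findGreatest (fun n => s n ≤ m) m

-- auxiliary lemmas, to be inserted before the theorem

lemma Alist_length (k : ℕ) : (Alist k).length = 2 ^ (k + 1) - 1 := by
  induction k with
  | zero => simp [Alist]
  | succ k ih =>
    have h2 : 1 ≤ 2 ^ (k+1) := Nat.one_le_two_pow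
    simp [Alist, ih, pow_succ]
    omega

lemma Alist_pos (k : ℕ) : ∀ x ∈ Alist k, 0 < x := by
  induction k with
  | zero => decide
  | succ k ih =>
    intro x hx
    simp only [Alist, List.mem_append, List.mem_singleton] at hx
    rcases hx with (h|h)|h
    · exact ih x h
    · exact ih x h
    · omega

lemma Alist_getD_stable {k k' j : ℕ} (hk : k ≤ k') (hj : j < 2 ^ (k + 1) - 1) :
    (Alist k').getD j 0 = (Alist k).getD j 0 := by
  induction k' with
  | zero => interval_cases k; rfl
  | succ k' ih =>
    rcases Nat.lt_or_ge k (k' + 1) with h | h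
    · have hk' : k ≤ k' := by omega
      have hjlen : j < (Alist k').length := by
        rw [Alist_length]
        have : 2 ^ (k+1) ≤ 2 ^ (k'+1) := Nat.pow_le_pow_right (by norm_num) (by omega)
        omega
      have : (Alist (k' + 1)).getD j 0 = (Alist k').getD j 0 := by
        show (Alist k' ++ Alist k' ++ [1]).getD j 0 = _
        rw [List.append_assoc, List.getD_append _ _ _ _ hjlen]
      rw [this, ih hk']
    · have : k = k' + 1 := by omega
      subst this; rfl

lemma aseq_eq {n k : ℕ} (hn : 1 ≤ n) (hk : n ≤ 2 ^ (k + 1) - 1) :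
    aseq n = (Alist k).getD (n - 1) 0 := by
  unfold aseq
  rcases Nat.le_total n k with h | h
  · have h2 : n + 1 < 2 ^ (n + 1) := Nat.lt_two_pow_self (n := n + 1)
    exact (Alist_getD_stable h (by omega)).symm
  · exact Alist_getD_stable h (by omega)

lemma aseq_pos {n : ℕ} (hn : 1 ≤ n) : 0 < aseq n := by
  have hlen : n - 1 < (Alist n).length := by
    rw [Alist_length]
    have : n + 1 ≤ 2 ^ (n+1) := le_of_lt (Nat.lt_two_pow_self (n := n + 1))
    omega
  unfold aseq
  rw [List.getD_eq_getElem _ _ hlen]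
  exact Alist_pos n _ (List.getElem_mem hlen)

lemma s_succ (n : ℕ) : s (n + 1) = s n + aseq (n + 1) := by
  unfold s
  rw [Finset.sum_Icc_succ_top (by omega)]

lemma s_zero : s 0 = 0 := by simp [s]

lemma s_one : s 1 = 5 := by
  rw [show (1:ℕ) = 0 + 1 from rfl, s_succ, s_zero]
  rfl

lemma s_lt_succ (n : ℕ) : s n < s (n + 1) := by
  rw [s_succ]; have := aseq_pos (n := n + 1) (by omega); omega

lemma s_strictMono : StrictMono s := strictMono_nat_of_lt_succ s_lt_succ

lemma le_s (n : ℕ) : n ≤ s n := by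
  induction n with
  | zero => simp [s_zero]
  | succ n ih => have := s_lt_succ n; omega

lemma aseq_shift {ℓ j : ℕ} (hℓ : 1 ≤ ℓ) (hj1 : 1 ≤ j) (hj : j ≤ 2 ^ ℓ - 1) :
    aseq (2 ^ ℓ - 1 + j) = aseq j := by
  have h2 : 2 ≤ 2 ^ ℓ := by calc 2 = 2^1 := rfl
                                _ ≤ 2^ℓ := Nat.pow_le_pow_right (by norm_num) hℓ
  obtain ⟨k, rfl⟩ : ∃ k, ℓ = k + 1 := ⟨ℓ - 1, by omega⟩
  have hlenk : (Alist k).length = 2 ^ (k+1) - 1 := Alist_length k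
  have hL : aseq (2 ^ (k+1) - 1 + j) = (Alist (k+1)).getD (2 ^ (k+1) - 1 + j - 1) 0 :=
    aseq_eq (by omega) (by rw [pow_succ]; omega)
  rw [hL]
  have hidx : 2 ^ (k+1) - 1 + j - 1 = (Alist k).length + (j - 1) := by omega
  have : (Alist (k+1)).getD (2 ^ (k+1) - 1 + j - 1) 0
      = (Alist k ++ [1]).getD (j - 1) 0 := by
    show (Alist k ++ Alist k ++ [1]).getD _ 0 = _
    rw [List.append_assoc, hidx, List.getD_append_right _ _ _ _ (by omega),
        Nat.add_sub_cancel_left]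
  rw [this, List.getD_append _ _ _ _ (by omega)]
  exact (aseq_eq hj1 (by omega)).symm

lemma mu_eq (i : ℕ) : mu i = 3 * 2 ^ i - 1 := by
  unfold mu; rw [pow_succ]; ring_nf

lemma s_shift_aux {ℓ : ℕ} (hℓ : 1 ≤ ℓ) (hs : s (2 ^ ℓ - 1) = mu ℓ) :
    ∀ j, j ≤ 2 ^ ℓ - 1 → s (2 ^ ℓ - 1 + j) = mu ℓ + s j := by
  intro j hj
  induction j with
  | zero => simpa [s_zero] using hs
  | succ j ih =>
    have h1 : 2 ^ ℓ - 1 + (j + 1) = (2 ^ ℓ - 1 + j) + 1 := by omega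
    rw [h1, s_succ, ih (by omega), s_succ]
    have ha := aseq_shift hℓ (show 1 ≤ j + 1 by omega) hj
    simp only [← Nat.add_assoc] at ha
    omega

lemma s_pow (ℓ : ℕ) (hℓ : 1 ≤ ℓ) : s (2 ^ ℓ - 1) = mu ℓ := by
  induction ℓ with
  | zero => omega
  | succ ℓ ih =>
    rcases Nat.eq_zero_or_pos ℓ with h | hℓ1
    · subst h
      show s (2 ^ 1 - 1) = mu 1
      rw [show (2:ℕ) ^ 1 - 1 = 1 from rfl, s_one]
      rfl
    · have h2 : 2 ≤ 2 ^ ℓ := by calc 2 = 2^1 := rfl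
                                    _ ≤ 2^ℓ := Nat.pow_le_pow_right (by norm_num) hℓ1
      have ihv := ih hℓ1
      have hsplit : 2 ^ (ℓ+1) - 1 = (2 ^ ℓ - 1 + (2 ^ ℓ - 1)) + 1 := by
        rw [pow_succ]; omega
      have hshift := s_shift_aux hℓ1 ihv (2 ^ ℓ - 1) le_rfl
      have hlast : aseq ((2 ^ ℓ - 1 + (2 ^ ℓ - 1)) + 1) = 1 := by
        have hval : aseq (2 ^ (ℓ+1) - 1) = (Alist ℓ).getD (2 ^ (ℓ+1) - 1 - 1) 0 :=
          aseq_eq (by rw [pow_succ]; omega) le_rfl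
        rw [← hsplit, hval]
        obtain ⟨k, rfl⟩ : ∃ k, ℓ = k + 1 := ⟨ℓ - 1, by omega⟩
        have hlk : (Alist k).length = 2 ^ (k+1) - 1 := Alist_length k
        have hidx : 2 ^ (k+1+1) - 1 - 1 = (Alist k ++ Alist k).length := by
          simp [hlk, pow_succ]; omega
        show (Alist k ++ Alist k ++ [1]).getD _ 0 = 1
        rw [hidx, List.getD_append_right _ _ _ _ le_rfl]
        simp
      rw [hsplit, s_succ, hshift, hlast, ihv, mu_eq, mu_eq, pow_succ]
      omega

lemma s_shift {ℓ j : ℕ} (hℓ : 1 ≤ ℓ) (hj : j ≤ 2 ^ ℓ - 1) :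
    s (2 ^ ℓ - 1 + j) = mu ℓ + s j :=
  s_shift_aux hℓ (s_pow ℓ hℓ) j hj

lemma mu_one : mu 1 = 5 := rfl

-- maxMu facts
lemma maxMu_spec {n : ℕ} (hn : 5 ≤ n) :
    1 ≤ maxMu n ∧ mu (maxMu n) ≤ n ∧ n < mu (maxMu n + 1) := by
  have h1 : 1 ≤ maxMu n :=
    Nat.le_findGreatest (by omega) ⟨one_pos, by rw [mu_one]; omega⟩
  have h2 : mu (maxMu n) ≤ n := by
    have := Nat.findGreatest_spec (P := fun ℓ => 0 < ℓ ∧ mu ℓ ≤ n) (n := n) (m := 1)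
      (by omega) ⟨one_pos, by rw [mu_one]; omega⟩
    exact this.2
  refine ⟨h1, h2, ?_⟩
  rcases Nat.lt_or_ge n (maxMu n + 1) with h | h
  · have hle : maxMu n ≤ n := Nat.findGreatest_le n
    have he : maxMu n = n := by omega
    have h3 : n + 1 < 2 ^ (n + 1) := Nat.lt_two_pow_self (n := n + 1)
    rw [he, mu_eq]
    omega
  · by_contra hc
    push_neg at hc
    exact (Nat.findGreatest_is_greatest (Nat.lt_succ_self _) h) ⟨by omega, hc⟩

lemma maxMu_le (n : ℕ) : maxMu n ≤ n := Nat.findGreatest_le n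

lemma mu_five {ℓ : ℕ} (hℓ : 1 ≤ ℓ) : 5 ≤ mu ℓ := by
  have : 2 ≤ 2 ^ ℓ := by calc 2 = 2^1 := rfl
                             _ ≤ 2^ℓ := Nat.pow_le_pow_right (by norm_num) hℓ
  rw [mu_eq]; omega

lemma mudig_zero_of_gt : ∀ n i, n < i → mudig n i = 0 := by
  intro n
  induction n using Nat.strong_induction_on with
  | _ n ih =>
    intro i hi
    rw [mudig]
    rcases le_or_gt n 4 with h | h
    · simp [h]
    · have hml := maxMu_le n
      have hspec := maxMu_spec (show 5 ≤ n by omega)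
      have hmu5 := mu_five hspec.1
      simp only [dif_neg (by omega : ¬ n ≤ 4)]
      have hne : i ≠ maxMu n := by omega
      split
      · simp [hne]
      · have : mudig (n - mu (maxMu n)) i = 0 :=
          ih (n - mu (maxMu n)) (by omega) i (by omega)
        simp [this, hne]

lemma phi_small {m : ℕ} (h : m ≤ 4) : phi m = 0 := by
  unfold phi
  apply Finset.sum_eq_zero
  intro i _
  rw [mudig]
  simp [h]

lemma key : ∀ m : ℕ, ∃ n, s n ≤ m ∧ m < s (n+1) ∧ m - s n ≤ 4 ∧
    m = 3 * n + 2 * phi m + (m - s n) := by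
  intro m
  induction m using Nat.strong_induction_on with
  | _ m ih =>
    rcases le_or_gt m 4 with h4 | h4
    · refine ⟨0, by simp [s_zero], ?_, by simp [s_zero]; omega, ?_⟩
      · rw [show (0:ℕ)+1 = 1 from rfl, s_one]; omega
      · rw [phi_small h4, s_zero]; omega
    · have hspec := maxMu_spec (show 5 ≤ m by omega)
      set ℓ := maxMu m with hℓdef
      obtain ⟨hℓ1, hmuL, hmuU⟩ := hspec
      have h2ℓ : 2 ≤ 2 ^ ℓ := by
        calc 2 = 2^1 := rfl
        _ ≤ 2^ℓ := Nat.pow_le_pow_right (by norm_num) hℓ1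
      have hmueq : mu ℓ = 3 * 2 ^ ℓ - 1 := mu_eq ℓ
      have hmusucc : mu (ℓ+1) = 3 * 2 ^ (ℓ+1) - 1 := mu_eq (ℓ+1)
      have hpow : (2:ℕ) ^ (ℓ+1) = 2 * 2 ^ ℓ := by rw [pow_succ]; ring
      have hm4 : ¬ m ≤ 4 := by omega
      have hr'le : m - mu ℓ ≤ mu ℓ := by omega
      have hℓm : ℓ ≤ m := maxMu_le m
      by_cases hr : m - mu ℓ = mu ℓ
      · -- m = 2 * mu ℓ
        have hm2 : m = 2 * mu ℓ := by omega
        have hdig : mudig m = fun i => if i = ℓ then 2 else 0 := by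
          rw [mudig]; simp [hm4, ← hℓdef, hr]
        have hphi : phi m = 2 := by
          unfold phi
          rw [hdig]
          rw [Finset.sum_ite_eq' (Finset.Icc 1 m) ℓ (fun _ => 2)]
          simp [Finset.mem_Icc, hℓ1, hℓm]
        have hsn : s (2 * (2 ^ ℓ - 1)) = m := by
          rw [show 2 * (2 ^ ℓ - 1) = 2 ^ ℓ - 1 + (2 ^ ℓ - 1) by omega,
            s_shift hℓ1 le_rfl, s_pow ℓ hℓ1]
          omega
        have hsn1 : s (2 * (2 ^ ℓ - 1) + 1) = mu (ℓ + 1) := by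
          rw [show 2 * (2 ^ ℓ - 1) + 1 = 2 ^ (ℓ+1) - 1 by rw [hpow]; omega]
          exact s_pow (ℓ+1) (by omega)
        refine ⟨2 * (2 ^ ℓ - 1), by omega, by omega, by omega, ?_⟩
        rw [hphi, hsn]
        omega
      · -- general branch
        set r' := m - mu ℓ with hr'def
        have hr'lt : r' < mu ℓ := by omega
        have hr'm : r' < m := by have := mu_five hℓ1; omega
        obtain ⟨n', hs1, hs2, hs3, hs4⟩ := ih r' hr'm
        have hn'lt : n' < 2 ^ ℓ - 1 := by
          by_contra hc
          have := s_strictMono.monotone (show 2 ^ ℓ - 1 ≤ n' by omega)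
          rw [s_pow ℓ hℓ1] at this
          omega
        have hdig : mudig m = fun i => (if i = ℓ then 1 else 0) + mudig r' i := by
          rw [mudig]; simp [hm4, ← hℓdef, ← hr'def, hr]
        have hphi : phi m = 1 + phi r' := by
          unfold phi
          rw [hdig]
          rw [Finset.sum_add_distrib]
          have e1 : ∑ i ∈ Finset.Icc 1 m, (if i = ℓ then 1 else 0) = 1 := by
            rw [Finset.sum_ite_eq' (Finset.Icc 1 m) ℓ (fun _ => 1)]
            simp [Finset.mem_Icc, hℓ1, hℓm]
          have e2 : ∑ i ∈ Finset.Icc 1 m, mudig r' i = ∑ i ∈ Finset.Icc 1 r', mudig r' i := by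
            refine (Finset.sum_subset ?_ ?_).symm
            · exact Finset.Icc_subset_Icc le_rfl (by omega)
            · intro i hi hni
              simp only [Finset.mem_Icc] at hi hni
              exact mudig_zero_of_gt r' i (by omega)
          rw [e1, e2]
        have hsn : s (2 ^ ℓ - 1 + n') = mu ℓ + s n' := s_shift hℓ1 (by omega)
        have hsn1 : s (2 ^ ℓ - 1 + n' + 1) = mu ℓ + s (n' + 1) := by
          rw [show 2 ^ ℓ - 1 + n' + 1 = 2 ^ ℓ - 1 + (n' + 1) by omega]
          exact s_shift hℓ1 (by omega)
        refine ⟨2 ^ ℓ - 1 + n', by omega, by omega, by omega, ?_⟩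
        rw [hphi, hsn]
        omega

/-- For each positive integer `m`, there is `r ∈ {0,1,2,3,4}` with
`m − r = 3·s⁻¹(m) + 2·φ(m)`, where `s⁻¹(m) = max{n : s(n) ≤ m}` and `φ(m)` is
the sum of the μ-digits of `m`. -/
theorem s_inverse_formula (m : ℕ) (hm : 1 ≤ m) :
    ∃ r : ℕ, r ≤ 4 ∧ m = 3 * sInv m + 2 * phi m + r := by
  obtain ⟨n, h1, h2, h3, h4⟩ := key m
  have hsInv : sInv m = n := by
    unfold sInv
    rw [Nat.findGreatest_eq_iff]
    refine ⟨le_trans (le_s n) h1, fun _ => h1, ?_⟩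
    intro k hk hkm hsk
    have : s (n + 1) ≤ s k := s_strictMono.monotone (by omega)
    omega
  exact ⟨m - s n, h3, by rw [hsInv]; omega⟩
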